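/- Let k be a positive integer, let l and δ be divisors of k, and let ζ be a primitive δ-th root of unity. Then the sum of ζ^r over all r with 0 ≤ r < k and gcd(r,k) = l equals c(k,l,δ) := (φ(k/l)/φ(δ/gcd(δ,l))) · μ(δ/gcd(δ,l)), where φ is Euler's totient function and μ is the Möbius function. -/

import Mathlib

open Finset

lemma aux_sum_moebius (n : ℕ) (hn : n ≠ 0) :
    ∑ e ∈ n.divisors, (ArithmeticFunction.moebius e : ℤ) = if n = 1 then 1 else 0 := by
  have h := congrFun (congrArg (fun f => f.toFun) ArithmeticFunction.moebius_mul_coe_zeta) n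
  rw [show (1 : ArithmeticFunction ℤ).toFun n = (1 : ArithmeticFunction ℤ) n from rfl,
    ArithmeticFunction.one_apply] at h
  rw [show (ArithmeticFunction.moebius * (ArithmeticFunction.zeta : ArithmeticFunction ℤ)).toFun n
      = ∑ x ∈ n.divisorsAntidiagonal, ArithmeticFunction.moebius x.1 *
        (ArithmeticFunction.zeta : ArithmeticFunction ℤ) x.2 from rfl] at h
  rw [Nat.sum_divisorsAntidiagonal
    (fun a b => ArithmeticFunction.moebius a * (ArithmeticFunction.zeta : ArithmeticFunction ℤ) b)] at h
  rw [← h]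
  apply Finset.sum_congr rfl
  intro e he
  have h2 : n / e ≠ 0 := by
    have := Nat.div_pos (Nat.le_of_dvd (Nat.pos_of_ne_zero hn) (Nat.dvd_of_mem_divisors he))
      (Nat.pos_of_mem_divisors he)
    omega
  simp [ArithmeticFunction.zeta_apply, h2]

/-- Sum of primitive d-th roots of unity is μ(d). -/
lemma aux_L0 (d : ℕ) (hd : 0 < d) (η : ℂ) (hη : IsPrimitiveRoot η d) :
    ∑ t ∈ (Finset.range d).filter (fun t => Nat.gcd t d = 1), η ^ t
      = ((ArithmeticFunction.moebius d : ℤ) : ℂ) := by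
  rcases eq_or_lt_of_le (Nat.succ_le_of_lt hd) with h1 | h1
  · simp [← h1]
  have hdne : d ≠ 0 := hd.ne'
  rw [Finset.sum_filter]
  have key : ∀ t ∈ Finset.range d, (if Nat.gcd t d = 1 then η ^ t else 0)
      = ∑ e ∈ d.divisors, (if e ∣ t then ((ArithmeticFunction.moebius e : ℤ) : ℂ) * η ^ t else 0) := by
    intro t _
    have hg : Nat.gcd t d ≠ 0 := fun h => hdne (Nat.eq_zero_of_gcd_eq_zero_right h)
    have hsub : ∑ e ∈ d.divisors, (if e ∣ t then ((ArithmeticFunction.moebius e : ℤ) : ℂ) * η ^ t else 0)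
        = (∑ e ∈ (Nat.gcd t d).divisors, ((ArithmeticFunction.moebius e : ℤ) : ℂ)) * η ^ t := by
      rw [Finset.sum_mul, ← Finset.sum_filter]
      apply Finset.sum_congr _ (fun _ _ => rfl)
      ext e
      simp only [Nat.mem_divisors, Finset.mem_filter, Nat.dvd_gcd_iff]
      constructor
      · rintro ⟨⟨he, -⟩, hd'⟩; exact ⟨⟨hd', he⟩, hg⟩
      · rintro ⟨⟨ht, he⟩, -⟩; exact ⟨⟨he, hdne⟩, ht⟩
    rw [hsub]
    have h3 := aux_sum_moebius (Nat.gcd t d) hg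
    have hcast : (∑ e ∈ (Nat.gcd t d).divisors, ((ArithmeticFunction.moebius e : ℤ) : ℂ))
        = (((if Nat.gcd t d = 1 then 1 else 0 : ℤ)) : ℂ) := by
      rw [← h3]; push_cast; rfl
    rw [hcast]
    split <;> simp
  rw [Finset.sum_congr rfl key, Finset.sum_comm]
  have inner : ∀ e ∈ d.divisors,
      (∑ t ∈ Finset.range d, if e ∣ t then ((ArithmeticFunction.moebius e : ℤ) : ℂ) * η ^ t else 0)
      = ((ArithmeticFunction.moebius e : ℤ) : ℂ) * ∑ j ∈ Finset.range (d / e), (η ^ e) ^ j := by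
    intro e he
    have hepos : 0 < e := Nat.pos_of_mem_divisors he
    have hedvd : e ∣ d := Nat.dvd_of_mem_divisors he
    rw [Finset.mul_sum, ← Finset.sum_filter]
    refine Finset.sum_nbij' (fun t => t / e) (fun j => e * j) ?_ ?_ ?_ ?_ ?_
    · intro t ht
      simp only [Finset.mem_filter, Finset.mem_range] at ht
      exact Finset.mem_range.2 (Nat.div_lt_div_of_lt_of_dvd hedvd ht.1)
    · intro j hj
      simp only [Finset.mem_range] at hj
      refine Finset.mem_filter.2 ⟨Finset.mem_range.2 ?_, Dvd.intro j rfl⟩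
      calc e * j < e * (d / e) := (Nat.mul_lt_mul_left hepos).2 hj
        _ = d := Nat.mul_div_cancel' hedvd
    · intro t ht
      exact Nat.mul_div_cancel' (Finset.mem_filter.1 ht).2
    · intro j _
      exact Nat.mul_div_cancel_left j hepos
    · intro t ht
      rw [← pow_mul, Nat.mul_div_cancel' (Finset.mem_filter.1 ht).2]
  rw [Finset.sum_congr rfl inner]
  rw [Finset.sum_eq_single d]
  · rw [Nat.div_self hd]; simp
  · intro e he hne
    have hedvd : e ∣ d := Nat.dvd_of_mem_divisors he
    have hepos : 0 < e := Nat.pos_of_mem_divisors he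
    have hprim : IsPrimitiveRoot (η ^ e) (d / e) :=
      hη.pow hd (Nat.mul_div_cancel' hedvd).symm
    have hgt : 1 < d / e := by
      have h4 := Nat.mul_div_cancel' hedvd
      have h5 : e < d := lt_of_le_of_ne (Nat.le_of_dvd hd hedvd) hne
      rcases Nat.lt_or_ge 1 (d / e) with h | h
      · exact h
      · exfalso; interval_cases h6 : d / e <;> omega
    rw [hprim.geom_sum_eq_zero hgt, mul_zero]
  · intro h; exact absurd (Nat.mem_divisors_self d hdne) h
lemma aux_sum_comp_surj {G H : Type*} [Group G] [Group H] [Fintype G] [Fintype H] [DecidableEq H]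
    (π : G →* H) (hs : Function.Surjective π) (F : H → ℂ) :
    ∑ u : G, F (π u) = (Fintype.card G / Fintype.card H : ℕ) • ∑ v : H, F v := by
  classical
  have hfiber : ∀ v : H, (Finset.univ.filter (fun u => π u = v)).card = Fintype.card π.ker := by
    intro v
    obtain ⟨u₀, hu₀⟩ := hs v
    rw [← Fintype.card_subtype]
    apply Fintype.card_congr
    refine ⟨fun u => ⟨u₀⁻¹ * u.1, ?_⟩, fun x => ⟨u₀ * x.1, ?_⟩, ?_, ?_⟩
    · have := u.2
      simp only [MonoidHom.mem_ker, map_mul, map_inv, this, hu₀, inv_mul_cancel]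
    · have := x.2
      rw [MonoidHom.mem_ker] at this
      simp [map_mul, this, hu₀]
    · intro u; ext; simp
    · intro x; ext; simp
  have hcardker : Fintype.card π.ker = Fintype.card G / Fintype.card H := by
    have h1 : Nat.card G = Nat.card (G ⧸ π.ker) * Nat.card π.ker :=
      Subgroup.card_eq_card_quotient_mul_card_subgroup π.ker
    have h2 : Nat.card (G ⧸ π.ker) = Nat.card H :=
      Nat.card_congr (QuotientGroup.quotientKerEquivOfSurjective π hs).toEquiv
    rw [h2] at h1
    have hH : 0 < Nat.card H := Nat.card_pos
    simp only [Nat.card_eq_fintype_card] at h1 hH ⊢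
    rw [h1, Nat.mul_div_cancel_left _ hH]
  calc ∑ u : G, F (π u)
      = ∑ v ∈ Finset.univ.image π, (Finset.univ.filter (fun u => π u = v)).card • F v :=
        Finset.sum_comp F π
    _ = ∑ v : H, (Finset.univ.filter (fun u => π u = v)).card • F v := by
        congr 1
        ext v
        simp only [Finset.mem_image, Finset.mem_univ, true_and, iff_true]
        exact hs v
    _ = ∑ v : H, (Fintype.card G / Fintype.card H : ℕ) • F v := by
        simp_rw [hfiber, hcardker]
    _ = _ := (Finset.smul_sum).symm

lemma aux_bridge (n : ℕ) [NeZero n] (η : ℂ) :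
    ∑ s ∈ (Finset.range n).filter (fun s => Nat.gcd s n = 1), η ^ s
      = ∑ u : (ZMod n)ˣ, η ^ ((u : ZMod n).val) := by
  symm
  refine Finset.sum_nbij' (fun u => (u : ZMod n).val)
    (fun s => if h : Nat.Coprime s n then ZMod.unitOfCoprime s h else 1) ?_ ?_ ?_ ?_ ?_
  · intro u _
    refine Finset.mem_filter.2 ⟨Finset.mem_range.2 (ZMod.val_lt _), ?_⟩
    exact ZMod.val_coe_unit_coprime u
  · intro s _; exact Finset.mem_univ _
  · intro u _
    have hc : Nat.Coprime ((u : ZMod n).val) n := ZMod.val_coe_unit_coprime u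
    simp only [dif_pos hc]
    ext
    rw [ZMod.coe_unitOfCoprime, ZMod.natCast_val, ZMod.cast_id]
  · intro s hs
    have hs' := Finset.mem_filter.1 hs
    have hc : Nat.Coprime s n := hs'.2
    simp only [dif_pos hc]
    rw [ZMod.coe_unitOfCoprime, ZMod.val_natCast,
      Nat.mod_eq_of_lt (Finset.mem_range.1 hs'.1)]
  · intro u _; rfl

lemma aux_L1 (m d : ℕ) (hm : 0 < m) (hdvd : d ∣ m) (η : ℂ) (hη : IsPrimitiveRoot η d) :
    ∑ s ∈ (Finset.range m).filter (fun s => Nat.gcd s m = 1), η ^ s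
      = ((Nat.totient m : ℂ) / (Nat.totient d : ℂ)) * ((ArithmeticFunction.moebius d : ℤ) : ℂ) := by
  haveI : NeZero m := ⟨hm.ne'⟩
  have hd0 : 0 < d := Nat.pos_of_dvd_of_pos hdvd hm
  haveI : NeZero d := ⟨hd0.ne'⟩
  have hpow : ∀ x : ℕ, η ^ (x % d) = η ^ x := by
    intro x
    conv_rhs => rw [← Nat.div_add_mod x d]
    rw [pow_add, pow_mul, hη.pow_eq_one, one_pow, one_mul]
  have step1 : ∀ u : (ZMod m)ˣ, η ^ ((u : ZMod m).val)
      = η ^ (((ZMod.unitsMap hdvd u : ZMod d)).val) := by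
    intro u
    have h1 : (ZMod.unitsMap hdvd u : ZMod d) = (((u : ZMod m).val : ℕ) : ZMod d) := by
      rw [ZMod.unitsMap_def]
      simp only [Units.coe_map, MonoidHom.coe_coe, ZMod.castHom_apply]
      rw [← ZMod.natCast_val]
    rw [h1, ZMod.val_natCast, hpow]
  calc ∑ s ∈ (Finset.range m).filter (fun s => Nat.gcd s m = 1), η ^ s
      = ∑ u : (ZMod m)ˣ, η ^ ((u : ZMod m).val) := aux_bridge m η
    _ = ∑ u : (ZMod m)ˣ, η ^ (((ZMod.unitsMap hdvd u : ZMod d)).val) :=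
        Finset.sum_congr rfl (fun u _ => step1 u)
    _ = (Fintype.card (ZMod m)ˣ / Fintype.card (ZMod d)ˣ : ℕ) •
          ∑ v : (ZMod d)ˣ, η ^ ((v : ZMod d).val) :=
        aux_sum_comp_surj (ZMod.unitsMap hdvd) (ZMod.unitsMap_surjective hdvd)
          (fun v => η ^ ((v : ZMod d).val))
    _ = (Nat.totient m / Nat.totient d : ℕ) •
          ∑ s ∈ (Finset.range d).filter (fun s => Nat.gcd s d = 1), η ^ s := by
        rw [ZMod.card_units_eq_totient, ZMod.card_units_eq_totient, aux_bridge d η]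
    _ = (Nat.totient m / Nat.totient d : ℕ) • ((ArithmeticFunction.moebius d : ℤ) : ℂ) := by
        rw [aux_L0 d hd0 η hη]
    _ = ((Nat.totient m : ℂ) / (Nat.totient d : ℂ)) * ((ArithmeticFunction.moebius d : ℤ) : ℂ) := by
        rw [nsmul_eq_mul]
        congr 1
        rw [Nat.cast_div (Nat.totient_dvd_of_dvd hdvd)]
        exact_mod_cast Nat.pos_iff_ne_zero.mp (Nat.totient_pos.mpr hd0)

/-- For `l, δ` divisors of `k` and `ζ` a primitive `δ`-th root of unity,
`∑_{0 ≤ r < k, gcd(r,k) = l} ζ^r = (φ(k/l)/φ(δ/gcd(δ,l))) · μ(δ/gcd(δ,l))`. -/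
theorem sum_primitive_root_gcd_eq (k l δ : ℕ) (hk : 0 < k) (hl : l ∣ k) (hδ : δ ∣ k)
    (ζ : ℂ) (hζ : IsPrimitiveRoot ζ δ) :
    ∑ r ∈ (Finset.range k).filter (fun r => Nat.gcd r k = l), ζ ^ r =
      ((Nat.totient (k / l) : ℂ) / (Nat.totient (δ / Nat.gcd δ l) : ℂ)) *
        ((ArithmeticFunction.moebius (δ / Nat.gcd δ l) : ℤ) : ℂ) := by
  set m := k / l with hm_def
  set g := Nat.gcd δ l with hg_def
  set d := δ / g with hd_def
  have hl0 : 0 < l := Nat.pos_of_dvd_of_pos hl hk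
  have hδ0 : 0 < δ := Nat.pos_of_dvd_of_pos hδ hk
  have hg0 : 0 < g := Nat.gcd_pos_of_pos_left l hδ0
  have hm0 : 0 < m := Nat.div_pos (Nat.le_of_dvd hk hl) hl0
  have hgδ : g ∣ δ := Nat.gcd_dvd_left δ l
  have hgl : g ∣ l := Nat.gcd_dvd_right δ l
  -- η = ζ^l is a primitive d-th root of unity
  have h1 : IsPrimitiveRoot (ζ ^ g) d := hζ.pow hδ0 (Nat.mul_div_cancel' hgδ).symm
  have hcop : Nat.Coprime (l / g) d := (Nat.coprime_div_gcd_div_gcd hg0).symm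
  have hη : IsPrimitiveRoot (ζ ^ l) d := by
    have h2 := h1.pow_of_coprime (l / g) hcop
    rwa [← pow_mul, Nat.mul_div_cancel' hgl] at h2
  -- d ∣ m
  have hld : l * d = Nat.lcm l δ := by
    rw [Nat.lcm, Nat.gcd_comm l δ, ← hg_def, hd_def, Nat.mul_div_assoc l hgδ]
  have hddvd : d ∣ m := by
    rw [hm_def, Nat.dvd_div_iff_mul_dvd hl, hld]
    exact Nat.lcm_dvd hl hδ
  -- reindex r = l * s
  have reindex : ∑ r ∈ (Finset.range k).filter (fun r => Nat.gcd r k = l), ζ ^ r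
      = ∑ s ∈ (Finset.range m).filter (fun s => Nat.gcd s m = 1), (ζ ^ l) ^ s := by
    refine Finset.sum_nbij' (fun r => r / l) (fun s => l * s) ?_ ?_ ?_ ?_ ?_
    · intro r hr
      obtain ⟨hr1, hr2⟩ := Finset.mem_filter.1 hr
      refine Finset.mem_filter.2 ⟨Finset.mem_range.2
        (Nat.div_lt_div_of_lt_of_dvd hl (Finset.mem_range.1 hr1)), ?_⟩
      have h3 := Nat.coprime_div_gcd_div_gcd (show 0 < Nat.gcd r k by rw [hr2]; exact hl0)
      rw [hr2] at h3
      exact h3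
    · intro s hs
      obtain ⟨hs1, hs2⟩ := Finset.mem_filter.1 hs
      have hk_eq : k = l * m := (Nat.mul_div_cancel' hl).symm
      refine Finset.mem_filter.2 ⟨Finset.mem_range.2 ?_, ?_⟩
      · rw [hk_eq]
        exact (Nat.mul_lt_mul_left hl0).2 (Finset.mem_range.1 hs1)
      · rw [hk_eq, Nat.gcd_mul_left, hs2, Nat.mul_one]
    · intro r hr
      obtain ⟨-, hr2⟩ := Finset.mem_filter.1 hr
      exact Nat.mul_div_cancel' (hr2 ▸ Nat.gcd_dvd_left r k)
    · intro s _
      exact Nat.mul_div_cancel_left s hl0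
    · intro r hr
      obtain ⟨-, hr2⟩ := Finset.mem_filter.1 hr
      rw [← pow_mul, Nat.mul_div_cancel' (hr2 ▸ Nat.gcd_dvd_left r k)]
  rw [reindex, aux_L1 m d hm0 hddvd (ζ ^ l) hη]
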